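/- Let G = (X, Y; E) be a connected bipartite graph. Then there exists a nonempty set S of vertices, any two of which are twins (i.e. all vertices of S have the same neighbourhood), such that the graph obtained from G by deleting S ∪ N(S) is connected (or empty), where N(S) is the union of the neighbourhoods of the vertices of S. -/

import Mathlib

/-- **Twins lemma.** Let `G = (X, Y; E)` be a connected bipartite graph. Then there is
a nonempty set `S` of vertices, any two of which are twins (have the same
neighbourhood), such that deleting `S ∪ N(S)` from `G` leaves a connected (or empty)
graph, where `N(S)` is the union of the neighbourhoods of the vertices of `S`. -/
theorem exists_twins_del_connected {V : Type*} [Fintype V] (G : SimpleGraph V)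
    (X Y : Set V) (hpart : ∀ v, v ∈ X ↔ v ∉ Y)
    (hbip : ∀ u v, G.Adj u v → (u ∈ X ↔ v ∈ Y))
    (hconn : G.Connected) :
    ∃ S : Set V, S.Nonempty ∧
      (∀ x ∈ S, ∀ y ∈ S, G.neighborSet x = G.neighborSet y) ∧
      (((S ∪ ⋃ s ∈ S, G.neighborSet s)ᶜ : Set V) = ∅ ∨
        (SimpleGraph.induce ((S ∪ ⋃ s ∈ S, G.neighborSet s)ᶜ : Set V) G).Connected) := by
  classical
  have hne : Nonempty V := hconn.nonempty
  obtain ⟨r⟩ := hne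
  -- adjacent vertices lie on opposite sides
  have hflip : ∀ a b, G.Adj a b → (a ∈ X ↔ b ∉ X) := by
    intro a b h
    have h1 := hbip a b h
    have h2 := hpart b
    tauto
  -- parity along walks
  have hpar : ∀ a b : V, ∀ p : G.Walk a b, ((a ∈ X) ↔ (b ∈ X)) ↔ Even p.length := by
    intro a b p
    induction p with
    | nil => simp
    | cons h p ih =>
      have := hflip _ _ h
      simp only [SimpleGraph.Walk.length_cons, Nat.even_add_one]
      tauto
  -- adjacent vertices have different distances from r
  have hAdjne : ∀ a b, G.Adj a b → G.dist r a ≠ G.dist r b := by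
    intro a b hab heq
    obtain ⟨p, hp⟩ := hconn.exists_walk_length_eq_dist r a
    obtain ⟨q, hq⟩ := hconn.exists_walk_length_eq_dist r b
    have h1 := (hpar r a p).symm
    have h2 := (hpar r b q).symm
    rw [hp] at h1; rw [hq] at h2; rw [heq] at h1
    have := hflip a b hab
    tauto
  have hAdjle : ∀ a b, G.Adj a b → G.dist r b ≤ G.dist r a + 1 := by
    intro a b hab
    calc G.dist r b ≤ G.dist r a + G.dist a b := hconn.dist_triangle
    _ ≤ G.dist r a + 1 := by
        have : G.dist a b = 1 := SimpleGraph.dist_eq_one_iff_adj.2 hab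
        omega
  -- choose d, the maximal distance
  obtain ⟨w0, -, hw0⟩ := Finset.exists_max_image Finset.univ (fun u => G.dist r u)
    ⟨r, Finset.mem_univ r⟩
  set d := G.dist r w0 with hd
  have hdmax : ∀ u, G.dist r u ≤ d := fun u => hw0 u (Finset.mem_univ u)
  -- choose v at distance d with minimal neighbourhood
  obtain ⟨v, hvT, hvmin⟩ := Finset.exists_min_image
    (Finset.univ.filter (fun u => G.dist r u = d)) (fun u => (G.neighborSet u).ncard)
    ⟨w0, by simp [hd]⟩
  have hvd : G.dist r v = d := by simpa using hvT
  have hvmin' : ∀ u, G.dist r u = d → (G.neighborSet v).ncard ≤ (G.neighborSet u).ncard := by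
    intro u hu
    exact hvmin u (by simp [hu])
  -- the set S of twins of v
  set S : Set V := {u | G.neighborSet u = G.neighborSet v} with hS
  have hvS : v ∈ S := rfl
  have hNS : (⋃ s ∈ S, G.neighborSet s) = G.neighborSet v := by
    apply Set.Subset.antisymm
    · intro z hz
      simp only [Set.mem_iUnion] at hz
      obtain ⟨s, hs, hzs⟩ := hz
      rwa [hs] at hzs
    · intro z hz
      exact Set.mem_iUnion₂.2 ⟨v, hvS, hz⟩
  -- F1 : neighbours of v are at distance d - 1
  have hF1 : ∀ u, G.Adj v u → G.dist r u + 1 = d := by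
    intro u hu
    have h1 := hdmax u
    have h2 := hAdjne v u hu
    have h3 := hAdjle u v hu.symm
    rw [hvd] at h2 h3
    omega
  -- F2 : minimality
  have hF2 : ∀ u, G.dist r u = d → G.neighborSet u ⊆ G.neighborSet v → u ∈ S := by
    intro u hud hsub
    exact Set.eq_of_subset_of_ncard_le hsub (hvmin' u hud) (Set.toFinite _)
  -- F0 : every non-root vertex has a neighbour closer to r
  have hF0 : ∀ w : V, w ≠ r → ∃ u, G.Adj u w ∧ G.dist r u + 1 = G.dist r w := by
    intro w hw
    obtain ⟨p, hp⟩ := hconn.exists_walk_length_eq_dist r w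
    obtain ⟨u, hadj, q, hq⟩ := SimpleGraph.Walk.exists_eq_cons_of_ne hw p.reverse
    refine ⟨u, hadj.symm, ?_⟩
    have hlen : q.reverse.length = p.length - 1 := by
      have := congrArg SimpleGraph.Walk.length hq
      simp at this
      simp [this]
    have h1 : G.dist r u ≤ p.length - 1 := by
      rw [← hlen]; exact SimpleGraph.dist_le _
    have h2 := hAdjle u w hadj.symm
    have h3 : G.dist r w ≠ 0 := fun h => hw (hconn.dist_eq_zero_iff.1 h).symm
    omega
  -- F0' : if some vertex differs from r, there is a vertex at distance 1
  have hF0' : ∀ x : V, x ≠ r → ∃ z, G.Adj r z ∧ G.dist r z = 1 := by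
    intro x hx
    obtain ⟨p, hp⟩ := hconn.exists_walk_length_eq_dist r x
    obtain ⟨z, hadj, q, hq⟩ := SimpleGraph.Walk.exists_eq_cons_of_ne (fun h => hx h.symm) p
    refine ⟨z, hadj, ?_⟩
    have h1 : G.dist r z ≤ 1 := SimpleGraph.dist_le (SimpleGraph.Walk.cons hadj SimpleGraph.Walk.nil)
    have h2 : G.dist r z ≠ 0 := fun h => G.loopless.irrefl r ((hconn.dist_eq_zero_iff.1 h) ▸ hadj)
    omega
  -- dist = 1 implies adjacency to r
  have hd1adj : ∀ z, G.dist r z = 1 → G.Adj r z := fun z hz =>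
    SimpleGraph.dist_eq_one_iff_adj.1 hz
  -- the deleted set and its complement
  set R : Set V := (S ∪ G.neighborSet v)ᶜ with hR
  have hmemR : ∀ w, w ∈ R ↔ w ∉ S ∧ ¬ G.Adj v w := by
    intro w
    simp [hR, SimpleGraph.mem_neighborSet]
  refine ⟨S, ⟨v, hvS⟩, ?_, ?_⟩
  · intro x hx y hy
    rw [hx, hy]
  rw [hNS]
  by_cases hRe : R = ∅
  · left; exact hRe
  right
  obtain ⟨x0, hx0⟩ := Set.nonempty_iff_ne_empty.2 hRe
  rw [hmemR] at hx0
  -- r itself survives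
  have hrR : r ∈ R := by
    rw [hmemR]
    constructor
    · -- r ∉ S
      intro hrS
      -- N(r) = N(v); we derive that x0 is deleted, contradiction
      have hNr : G.neighborSet r = G.neighborSet v := hrS
      have hx0r : x0 ≠ r := by
        intro h; exact hx0.1 (h ▸ hrS)
      -- d = 2 : there is a vertex at distance 1, adjacent to r hence to v
      obtain ⟨z, hz, hz1⟩ := hF0' x0 hx0r
      have hzv : G.Adj v z := by
        have : z ∈ G.neighborSet r := hz
        rw [hNr] at this
        exact this
      have hd2 : d = 2 := by have := hF1 z hzv; omega
      -- distance of x0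
      have hx0d : G.dist r x0 = 2 := by
        obtain ⟨u, hu, hud⟩ := hF0 x0 hx0r
        have h1 : G.dist r x0 ≤ d := hdmax x0
        rcases Nat.lt_or_ge (G.dist r x0) 2 with h | h
        · -- dist 1 : adjacent to r, hence x0 ∈ N(r) = N(v), contra
          have : G.dist r x0 = 1 := by omega
          have hadj := hd1adj x0 this
          have : x0 ∈ G.neighborSet r := hadj
          rw [hNr] at this
          exact absurd this hx0.2
        · omega
      -- all neighbours of x0 are at distance 1, hence in N(r) = N(v)
      have hsub : G.neighborSet x0 ⊆ G.neighborSet v := by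
        intro z' hz'
        have hadj : G.Adj x0 z' := hz'
        have h1 := hdmax z'
        have h2 := hAdjne x0 z' hadj
        have h3 := hAdjle x0 z' hadj
        rw [hx0d] at h2 h3
        have h4 := hAdjle z' x0 hadj.symm
        have : G.dist r z' = 1 := by omega
        have := hd1adj z' this
        have : z' ∈ G.neighborSet r := this
        rwa [hNr] at this
      exact hx0.1 (hF2 x0 (by omega) hsub)
    · -- r ∉ N(v)
      intro hrv
      have hd1 : d = 1 := by
        have := hF1 r hrv
        have : G.dist r r = 0 := hconn.dist_eq_zero_iff.2 rfl
        omega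
      -- every vertex ≠ r is at distance 1 and all its neighbours are r ∈ N(v): so in S
      have hx0r : x0 ≠ r := by
        intro h; subst h; exact hx0.2 hrv
      have hx0d : G.dist r x0 = 1 := by
        have h1 := hdmax x0
        have h2 : G.dist r x0 ≠ 0 := fun h => hx0r (hconn.dist_eq_zero_iff.1 h).symm
        omega
      have hsub : G.neighborSet x0 ⊆ G.neighborSet v := by
        intro z' hz'
        have hadj : G.Adj x0 z' := hz'
        have h1 := hdmax z'
        have h2 := hAdjne x0 z' hadj
        rw [hx0d] at h2
        have h0 : G.dist r z' = 0 := by omega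
        have hz : r = z' := hconn.dist_eq_zero_iff.1 h0
        rw [← hz]
        exact (G.mem_neighborSet v r).2 hrv
      exact hx0.1 (hF2 x0 (by omega) hsub)
  -- descent : any surviving vertex other than r has a surviving neighbour strictly closer to r
  have hdesc : ∀ w, w ∈ R → w ≠ r →
      ∃ u, G.Adj w u ∧ u ∈ R ∧ G.dist r u < G.dist r w := by
    intro w hwR hwr
    rw [hmemR] at hwR
    obtain ⟨u0, hu0, hu0d⟩ := hF0 w hwr
    by_cases hu0S : u0 ∈ S
    · exfalso
      have : w ∈ G.neighborSet u0 := (G.mem_neighborSet u0 w).2 hu0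
      rw [hu0S] at this
      exact hwR.2 ((G.mem_neighborSet v w).1 this)
    by_cases hu0N : G.Adj v u0
    · -- then dist w = d ; use minimality to find another neighbour
      have hu0dist := hF1 u0 hu0N
      have hwd : G.dist r w = d := by omega
      by_cases hsub : G.neighborSet w ⊆ G.neighborSet v
      · exact absurd (hF2 w hwd hsub) hwR.1
      · obtain ⟨u, huw, huv⟩ := Set.not_subset.1 hsub
        have hadj : G.Adj w u := huw
        have huvN : ¬ G.Adj v u := huv
        have huS : u ∉ S := by
          intro huS
          have : w ∈ G.neighborSet u := (G.mem_neighborSet u w).2 hadj.symm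
          rw [huS] at this
          exact hwR.2 ((G.mem_neighborSet v w).1 this)
        refine ⟨u, hadj, (hmemR u).2 ⟨huS, huvN⟩, ?_⟩
        have h1 := hdmax u
        have h2 := hAdjne w u hadj
        rw [hwd] at h2
        omega
    · exact ⟨u0, hu0.symm, (hmemR u0).2 ⟨hu0S, hu0N⟩, by omega⟩
  -- connectivity of the induced graph
  have key : ∀ n : ℕ, ∀ w, ∀ hw : w ∈ R, G.dist r w = n →
      (SimpleGraph.induce R G).Reachable ⟨w, hw⟩ ⟨r, hrR⟩ := by
    intro n
    induction n using Nat.strong_induction_on with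
    | _ n ih =>
      intro w hw hdw
      by_cases hwr : w = r
      · subst hwr
        exact SimpleGraph.Reachable.refl _
      · obtain ⟨u, hadj, huR, hult⟩ := hdesc w hw hwr
        have hreach := ih (G.dist r u) (by omega) u huR rfl
        have hadj' : (SimpleGraph.induce R G).Adj ⟨w, hw⟩ ⟨u, huR⟩ := hadj
        exact hadj'.reachable.trans hreach
  haveI : Nonempty ((S ∪ G.neighborSet v)ᶜ : Set V) := ⟨⟨r, hrR⟩⟩
  refine ⟨?_⟩
  rintro ⟨a, ha⟩ ⟨b, hb⟩
  exact (key _ a ha rfl).trans (key _ b hb rfl).symm
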